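/- Let α > 0, δ ∈ (0, α), and let g : (0,∞) → ℝ have g' ≤ 0 satisfying −g'(s + t) ≤ −g'(s) e^{(α−δ)t} for all s > 0, t ≥ 0. Let E be a real Hilbert space and η : (0,∞) → E locally absolutely continuous with η(s) → 0 as s → 0⁺ and ∫₀^∞ −g'(y) ‖η'(y)‖² dy < ∞. Then for every ν > 0, −g'(ν) ‖η(ν)‖² ≤ ν e^{(α−δ)ν} ∫₀^ν −g'(y) ‖η'(y)‖² dy; consequently lim_{ν→0⁺} g'(ν) ‖η(ν)‖² = 0. -/

import Mathlib

open MeasureTheory Filter Topology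

lemma sq_setIntegral_le_mul {ν : ℝ} (hν : 0 < ν) {h : ℝ → ℝ}
    (hm : AEStronglyMeasurable h (volume.restrict (Set.Ioo 0 ν)))
    (h2 : IntegrableOn (fun y => h y ^ 2) (Set.Ioo 0 ν)) :
    (∫ y in Set.Ioo (0:ℝ) ν, h y) ^ 2 ≤ ν * ∫ y in Set.Ioo (0:ℝ) ν, h y ^ 2 := by
  have hfin : volume (Set.Ioo (0:ℝ) ν) < ⊤ := by
    rw [Real.volume_Ioo]; exact ENNReal.ofReal_lt_top
  have hmeas : (volume (Set.Ioo (0:ℝ) ν)).toReal = ν := by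
    rw [Real.volume_Ioo, ENNReal.toReal_ofReal (by linarith)]; ring
  have h1 : IntegrableOn h (Set.Ioo 0 ν) := by
    refine Integrable.mono' (g := fun y => (1 + h y ^ 2) / 2) ?_ hm ?_
    · exact ((integrable_const 1).add h2).div_const 2
    · filter_upwards with y
      have := sq_nonneg (|h y| - 1)
      rw [Real.norm_eq_abs]
      nlinarith [sq_abs (h y), abs_nonneg (h y)]
  set I := ∫ y in Set.Ioo (0:ℝ) ν, h y with hI
  set J := ∫ y in Set.Ioo (0:ℝ) ν, h y ^ 2 with hJ
  have key : ∀ t : ℝ, 0 ≤ J - 2 * t * I + t ^ 2 * ν := by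
    intro t
    have hcm : Integrable (fun y => 2 * t * h y) (volume.restrict (Set.Ioo 0 ν)) := by
      exact h1.const_mul (2 * t)
    have hab : Integrable (fun y => h y ^ 2 - 2 * t * h y)
        (volume.restrict (Set.Ioo 0 ν)) := by exact h2.sub hcm
    have hnn : 0 ≤ ∫ y in Set.Ioo (0:ℝ) ν, (h y ^ 2 - 2 * t * h y + t ^ 2) :=
      setIntegral_nonneg measurableSet_Ioo (fun y _ => by nlinarith [sq_nonneg (h y - t)])
    have e1 : ∫ y in Set.Ioo (0:ℝ) ν, (h y ^ 2 - 2 * t * h y + t ^ 2)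
        = (∫ y in Set.Ioo (0:ℝ) ν, (h y ^ 2 - 2 * t * h y)) + ν * t ^ 2 := by
      rw [integral_add hab (integrableOn_const hfin.ne), setIntegral_const,
        smul_eq_mul, measureReal_def, hmeas]
    have e2 : ∫ y in Set.Ioo (0:ℝ) ν, (h y ^ 2 - 2 * t * h y) = J - 2 * t * I := by
      rw [integral_sub h2 hcm, integral_const_mul]
    rw [e1, e2] at hnn
    linarith
  nlinarith [key (I / ν), div_mul_cancel₀ I (ne_of_gt hν), hν]

/-- the boundary term at zero in the integration by parts:
`-g'(ν) ‖η(ν)‖² ≤ ν e^{(α-δ)ν} ∫₀^ν -g'(y) ‖η'(y)‖² dy`, hence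
`g'(ν) ‖η(ν)‖² → 0` as `ν → 0⁺`. -/
theorem mgt_boundary_term_at_zero
    {E : Type*} [NormedAddCommGroup E] [InnerProductSpace ℝ E] [CompleteSpace E]
    (α δ : ℝ) (hδ : 0 < δ) (hδα : δ < α)
    (g' : ℝ → ℝ)
    (hg'_nonpos : ∀ s ∈ Set.Ioi (0 : ℝ), g' s ≤ 0)
    (hexp : ∀ s ∈ Set.Ioi (0 : ℝ), ∀ t : ℝ, 0 ≤ t →
      -g' (s + t) ≤ -g' s * Real.exp ((α - δ) * t))
    (η η' : ℝ → E)
    (hη'loc : ∀ ν : ℝ, 0 < ν → IntervalIntegrable η' MeasureTheory.volume 0 ν)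
    (hrepr : ∀ ν : ℝ, 0 < ν → η ν = ∫ y in (0 : ℝ)..ν, η' y)
    (hη'_int : IntegrableOn (fun y => -g' y * ‖η' y‖ ^ 2) (Set.Ioi 0)) :
    (∀ ν : ℝ, 0 < ν →
      -g' ν * ‖η ν‖ ^ 2 ≤
        ν * Real.exp ((α - δ) * ν) * ∫ y in Set.Ioo (0 : ℝ) ν, -g' y * ‖η' y‖ ^ 2) ∧
    Tendsto (fun ν => g' ν * ‖η ν‖ ^ 2) (nhdsWithin 0 (Set.Ioi 0)) (nhds 0) := by
  have hc : 0 < α - δ := by linarith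
  have hfnn : ∀ y ∈ Set.Ioi (0:ℝ), 0 ≤ -g' y * ‖η' y‖ ^ 2 := fun y hy =>
    mul_nonneg (neg_nonneg.2 (hg'_nonpos y hy)) (by positivity)
  have hmain : ∀ ν : ℝ, 0 < ν →
      -g' ν * ‖η ν‖ ^ 2 ≤
        ν * Real.exp ((α - δ) * ν) * ∫ y in Set.Ioo (0 : ℝ) ν, -g' y * ‖η' y‖ ^ 2 := by
    intro ν hν
    have hsub : Set.Ioo (0:ℝ) ν ⊆ Set.Ioi 0 := fun y hy => hy.1
    have hInt_f : IntegrableOn (fun y => -g' y * ‖η' y‖ ^ 2) (Set.Ioo 0 ν) :=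
      hη'_int.mono_set hsub
    have hIntNonneg : 0 ≤ ∫ y in Set.Ioo (0:ℝ) ν, -g' y * ‖η' y‖ ^ 2 :=
      setIntegral_nonneg measurableSet_Ioo (fun y hy => hfnn y hy.1)
    have hgν : 0 ≤ -g' ν := neg_nonneg.2 (hg'_nonpos ν hν)
    rcases eq_or_lt_of_le hgν with h0 | hpos
    · rw [← h0, zero_mul]
      positivity
    · -- pointwise bound
      have pt : ∀ y ∈ Set.Ioo (0:ℝ) ν, -g' ν ≤ -g' y * Real.exp ((α - δ) * ν) := by
        intro y hy
        have h1 := hexp y hy.1 (ν - y) (by linarith [hy.2])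
        have hyν : y + (ν - y) = ν := by ring
        rw [hyν] at h1
        have hgy : 0 ≤ -g' y := neg_nonneg.2 (hg'_nonpos y hy.1)
        have h2 : Real.exp ((α - δ) * (ν - y)) ≤ Real.exp ((α - δ) * ν) :=
          Real.exp_le_exp.2 (by nlinarith [hy.1])
        exact h1.trans (mul_le_mul_of_nonneg_left h2 hgy)
      have hη'meas : AEStronglyMeasurable η' (volume.restrict (Set.Ioo 0 ν)) :=
        ((hη'loc ν hν).1.mono_set Set.Ioo_subset_Ioc_self).aestronglyMeasurable
      have hsqmeas : AEStronglyMeasurable (fun y => ‖η' y‖ ^ 2)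
          (volume.restrict (Set.Ioo 0 ν)) := by
        have := hη'meas.norm.mul hη'meas.norm
        simpa [pow_two, Pi.mul_def] using this
      have hsqint : IntegrableOn (fun y => ‖η' y‖ ^ 2) (Set.Ioo 0 ν) := by
        refine Integrable.mono'
          (hInt_f.const_mul (Real.exp ((α - δ) * ν) / (-g' ν))) hsqmeas ?_
        refine (ae_restrict_iff' measurableSet_Ioo).2 (Eventually.of_forall fun y hy => ?_)
        rw [Real.norm_eq_abs, abs_of_nonneg (by positivity), div_mul_eq_mul_div,
          le_div_iff₀ hpos]
        have h3 := mul_le_mul_of_nonneg_left (pt y hy) (by positivity : (0:ℝ) ≤ ‖η' y‖ ^ 2)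
        exact h3.trans_eq (by ring)
      have hnormη : ‖η ν‖ ≤ ∫ y in Set.Ioo (0:ℝ) ν, ‖η' y‖ := by
        rw [hrepr ν hν]
        refine le_trans (intervalIntegral.norm_integral_le_integral_norm_uIoc) ?_
        rw [Set.uIoc_of_le hν.le, integral_Ioc_eq_integral_Ioo]
      have hCS := sq_setIntegral_le_mul hν hη'meas.norm hsqint
      have hstep1 : -g' ν * ‖η ν‖ ^ 2 ≤ -g' ν * (ν * ∫ y in Set.Ioo (0:ℝ) ν, ‖η' y‖ ^ 2) := by
        refine mul_le_mul_of_nonneg_left ?_ hgν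
        exact (pow_le_pow_left₀ (norm_nonneg _) hnormη 2).trans hCS
      have hstep2 : ∫ y in Set.Ioo (0:ℝ) ν, -g' ν * ‖η' y‖ ^ 2 ≤
          ∫ y in Set.Ioo (0:ℝ) ν, Real.exp ((α - δ) * ν) * (-g' y * ‖η' y‖ ^ 2) := by
        refine setIntegral_mono_on (hsqint.const_mul _) (hInt_f.const_mul _)
          measurableSet_Ioo fun y hy => ?_
        have h3 := mul_le_mul_of_nonneg_right (pt y hy) (by positivity : (0:ℝ) ≤ ‖η' y‖ ^ 2)
        exact h3.trans_eq (by ring)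
      calc -g' ν * ‖η ν‖ ^ 2
          ≤ -g' ν * (ν * ∫ y in Set.Ioo (0:ℝ) ν, ‖η' y‖ ^ 2) := hstep1
        _ = ν * ∫ y in Set.Ioo (0:ℝ) ν, -g' ν * ‖η' y‖ ^ 2 := by
            rw [integral_const_mul]; ring
        _ ≤ ν * ∫ y in Set.Ioo (0:ℝ) ν, Real.exp ((α - δ) * ν) * (-g' y * ‖η' y‖ ^ 2) :=
            mul_le_mul_of_nonneg_left hstep2 hν.le
        _ = ν * Real.exp ((α - δ) * ν) * ∫ y in Set.Ioo (0:ℝ) ν, -g' y * ‖η' y‖ ^ 2 := by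
            rw [integral_const_mul]; ring
  refine ⟨hmain, ?_⟩
  set C := ∫ y in Set.Ioi (0:ℝ), -g' y * ‖η' y‖ ^ 2 with hC
  have hbound : ∀ ν ∈ Set.Ioi (0:ℝ),
      -g' ν * ‖η ν‖ ^ 2 ≤ ν * Real.exp ((α - δ) * ν) * C := by
    intro ν hν
    refine (hmain ν hν).trans (mul_le_mul_of_nonneg_left ?_ (mul_nonneg (le_of_lt (Set.mem_Ioi.1 hν)) (Real.exp_pos _).le))
    refine setIntegral_mono_set hη'_int ?_ ?_
    · exact (ae_restrict_iff' measurableSet_Ioi).2 (Eventually.of_forall hfnn)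
    · exact (Set.Ioo_subset_Ioi_self).eventuallyLE
  have htend0 : Tendsto (fun ν : ℝ => ν * Real.exp ((α - δ) * ν) * C)
      (nhdsWithin 0 (Set.Ioi 0)) (nhds 0) := by
    have hco : Continuous fun ν : ℝ => ν * Real.exp ((α - δ) * ν) * C := by
      continuity
    have := (hco.tendsto 0).mono_left (nhdsWithin_le_nhds (s := Set.Ioi (0:ℝ)))
    simpa using this
  have hneg : Tendsto (fun ν => -g' ν * ‖η ν‖ ^ 2) (nhdsWithin 0 (Set.Ioi 0)) (nhds 0) := by
    refine squeeze_zero' ?_ ?_ htend0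
    · exact eventually_nhdsWithin_of_forall fun ν hν =>
        mul_nonneg (neg_nonneg.2 (hg'_nonpos ν hν)) (by positivity)
    · exact eventually_nhdsWithin_of_forall hbound
  have := hneg.neg
  simpa using this
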